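/- The smallest-volume ellipse containing an equilateral triangle in ℝ² is its circumscribed circle; in particular, the center of the minimum-volume enclosing ellipse of an equilateral triangle is its circumcenter. -/

import Mathlib

open MeasureTheory
open scoped Pointwise
set_option maxHeartbeats 800000

/-- An ellipse in the Euclidean plane: the image of the closed unit disk
under an invertible affine map. -/
def IsEllipsoid (S : Set (EuclideanSpace ℝ (Fin 2))) : Prop :=
  ∃ L : EuclideanSpace ℝ (Fin 2) ≃ᵃ[ℝ] EuclideanSpace ℝ (Fin 2),
    S = L '' Metric.closedBall 0 1

section Aux
open Metric
noncomputable section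
local notation "E2" => EuclideanSpace ℝ (Fin 2)

private def det2 (u v : E2) : ℝ := u 0 * v 1 - u 1 * v 0

private lemma normsq (x : E2) : ‖x‖^2 = x 0^2 + x 1^2 := by
  rw [EuclideanSpace.norm_eq, Real.sq_sqrt (by positivity)]
  simp [Fin.sum_univ_two]

private lemma distsq (x y : E2) : dist x y ^2 = (x 0 - y 0)^2 + (x 1 - y 1)^2 := by
  rw [EuclideanSpace.dist_eq, Real.sq_sqrt (by positivity)]
  simp [Fin.sum_univ_two, Real.dist_eq, sq_abs]

private lemma e2ext (x y : E2) (h0 : x 0 = y 0) (h1 : x 1 = y 1) : x = y := by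
  ext i; fin_cases i <;> assumption

private lemma decomp (x : E2) : x = x 0 • (EuclideanSpace.single 0 1 : E2) + x 1 • EuclideanSpace.single 1 1 := by
  apply e2ext <;> simp

private lemma det2_map (f : E2 →ₗ[ℝ] E2) (u v : E2) :
    det2 (f u) (f v) = LinearMap.det f * det2 u v := by
  have hdet : LinearMap.det f =
      (f (EuclideanSpace.single 0 1)) 0 * (f (EuclideanSpace.single 1 1)) 1 -
      (f (EuclideanSpace.single 0 1)) 1 * (f (EuclideanSpace.single 1 1)) 0 := by
    rw [← LinearMap.det_toMatrix (EuclideanSpace.basisFun (Fin 2) ℝ).toBasis f,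
      Matrix.det_fin_two]
    simp [LinearMap.toMatrix_apply]
    ring
  have happ : ∀ x : E2, f x = x 0 • f (EuclideanSpace.single 0 1) + x 1 • f (EuclideanSpace.single 1 1) := by
    intro x
    conv_lhs => rw [decomp x]
    simp
  simp only [det2, happ u, happ v, hdet]
  simp only [PiLp.add_apply, PiLp.smul_apply, smul_eq_mul]
  ring

private lemma pqr_ineq (p q r D : ℝ) (hpn : 0 ≤ p) (hqn : 0 ≤ q) (hrn : 0 ≤ r)
    (key : 4*D^2 = 2*(p*q+q*r+r*p) - (p^2+q^2+r^2)) (sum9 : p+q+r ≤ 9) :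
    D^2 ≤ 27/4 := by
  have h1 : (p+q+r)^2 - 12*D^2 = 2*((p-q)^2+(q-r)^2+(r-p)^2) := by linear_combination -3*key
  have h2 : (p+q+r)^2 ≤ 81 := by nlinarith
  nlinarith [sq_nonneg (p-q), sq_nonneg (q-r), sq_nonneg (r-p)]

private lemma pqr_eq (p q r D : ℝ) (hpn : 0 ≤ p) (hqn : 0 ≤ q) (hrn : 0 ≤ r)
    (key : 4*D^2 = 2*(p*q+q*r+r*p) - (p^2+q^2+r^2)) (sum9 : p+q+r ≤ 9)
    (hE : D^2 = 27/4) : p+q+r = 9 ∧ p = 3 ∧ q = 3 ∧ r = 3 := by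
  have h1 : (p+q+r)^2 - 12*D^2 = 2*((p-q)^2+(q-r)^2+(r-p)^2) := by linear_combination -3*key
  have hsq : 81 ≤ (p+q+r)^2 := by
    have := sq_nonneg (p-q); have := sq_nonneg (q-r); have := sq_nonneg (r-p); linarith
  have hsn : 0 ≤ p+q+r := by linarith
  have hge : 9 ≤ p+q+r := by nlinarith
  have h9 : p+q+r = 9 := le_antisymm sum9 hge
  have h81 : (p+q+r)^2 = 81 := by rw [h9]; norm_num
  have hz : (p-q)^2+(q-r)^2+(r-p)^2 = 0 := by linarith
  have e1 : (p-q)^2 = 0 := by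
    have := sq_nonneg (p-q); have := sq_nonneg (q-r); have := sq_nonneg (r-p); linarith
  have e2 : (q-r)^2 = 0 := by
    have := sq_nonneg (p-q); have := sq_nonneg (q-r); have := sq_nonneg (r-p); linarith
  have hpq : p = q := by have := sq_eq_zero_iff.mp e1; linarith [this]
  have hqr : q = r := by have := sq_eq_zero_iff.mp e2; linarith [this]
  exact ⟨h9, by linarith, by linarith, by linarith⟩

variable (a0 a1 b0 b1 c0 c1 : ℝ)

private lemma core_ineq (ha : a0^2+a1^2 ≤ 1) (hb : b0^2+b1^2 ≤ 1) (hc : c0^2+c1^2 ≤ 1) :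
    ((b0-a0)*(c1-a1) - (b1-a1)*(c0-a0))^2 ≤ 27/4 := by
  refine pqr_ineq ((b0-c0)^2+(b1-c1)^2) ((c0-a0)^2+(c1-a1)^2) ((a0-b0)^2+(a1-b1)^2) _
    (by positivity) (by positivity) (by positivity) (by ring) ?_
  have hid : ((b0-c0)^2+(b1-c1)^2) + ((c0-a0)^2+(c1-a1)^2) + ((a0-b0)^2+(a1-b1)^2)
        = 3*((a0^2+a1^2)+(b0^2+b1^2)+(c0^2+c1^2)) - ((a0+b0+c0)^2+(a1+b1+c1)^2) := by ring
  linarith [sq_nonneg (a0+b0+c0), sq_nonneg (a1+b1+c1)]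

private lemma core_eq (ha : a0^2+a1^2 ≤ 1) (hb : b0^2+b1^2 ≤ 1) (hc : c0^2+c1^2 ≤ 1)
    (hE : ((b0-a0)*(c1-a1) - (b1-a1)*(c0-a0))^2 = 27/4) :
    a0^2+a1^2 = 1 ∧ b0^2+b1^2 = 1 ∧ c0^2+c1^2 = 1 ∧
    a0+b0+c0 = 0 ∧ a1+b1+c1 = 0 ∧
    (b0-c0)^2+(b1-c1)^2 = 3 ∧ (c0-a0)^2+(c1-a1)^2 = 3 ∧ (a0-b0)^2+(a1-b1)^2 = 3 := by
  have sum9 : ((b0-c0)^2+(b1-c1)^2) + ((c0-a0)^2+(c1-a1)^2) + ((a0-b0)^2+(a1-b1)^2) ≤ 9 := by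
    have hid : ((b0-c0)^2+(b1-c1)^2) + ((c0-a0)^2+(c1-a1)^2) + ((a0-b0)^2+(a1-b1)^2)
        = 3*((a0^2+a1^2)+(b0^2+b1^2)+(c0^2+c1^2)) - ((a0+b0+c0)^2+(a1+b1+c1)^2) := by ring
    linarith [sq_nonneg (a0+b0+c0), sq_nonneg (a1+b1+c1)]
  obtain ⟨h9, hp3, hq3, hr3⟩ := pqr_eq ((b0-c0)^2+(b1-c1)^2) ((c0-a0)^2+(c1-a1)^2)
    ((a0-b0)^2+(a1-b1)^2) _ (by positivity) (by positivity) (by positivity) (by ring) sum9 hE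
  have hid2 : ((b0-c0)^2+(b1-c1)^2) + ((c0-a0)^2+(c1-a1)^2) + ((a0-b0)^2+(a1-b1)^2)
      = 3*((a0^2+a1^2)+(b0^2+b1^2)+(c0^2+c1^2)) - ((a0+b0+c0)^2+(a1+b1+c1)^2) := by ring
  have hn3 : ((a0^2+a1^2)+(b0^2+b1^2)+(c0^2+c1^2)) = 3 := by
    linarith [sq_nonneg (a0+b0+c0), sq_nonneg (a1+b1+c1)]
  have hz : (a0+b0+c0)^2+(a1+b1+c1)^2 = 0 := by
    linarith [sq_nonneg (a0+b0+c0), sq_nonneg (a1+b1+c1)]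
  have h0 : a0+b0+c0 = 0 := by
    have : (a0+b0+c0)^2 = 0 := by linarith [sq_nonneg (a1+b1+c1), sq_nonneg (a0+b0+c0)]
    exact sub_eq_zero.mp (by simpa using sq_eq_zero_iff.mp this)
  have h1' : a1+b1+c1 = 0 := by
    have : (a1+b1+c1)^2 = 0 := by linarith [sq_nonneg (a0+b0+c0), sq_nonneg (a1+b1+c1)]
    exact sub_eq_zero.mp (by simpa using sq_eq_zero_iff.mp this)
  refine ⟨by linarith, by linarith, by linarith, h0, h1', hp3, hq3, hr3⟩

private lemma detABC (A0 A1 B0 B1 C0 C1 t : ℝ)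
    (hAB : (A0-B0)^2+(A1-B1)^2 = t)
    (hBC : (B0-C0)^2+(B1-C1)^2 = t)
    (hCA : (C0-A0)^2+(C1-A1)^2 = t) :
    4*((B0-A0)*(C1-A1) - (B1-A1)*(C0-A0))^2 = 3*t^2 := by
  have hkey : 4*((B0-A0)*(C1-A1) - (B1-A1)*(C0-A0))^2 =
      2*(((A0-B0)^2+(A1-B1)^2)*((B0-C0)^2+(B1-C1)^2)
        + ((B0-C0)^2+(B1-C1)^2)*((C0-A0)^2+(C1-A1)^2)
        + ((C0-A0)^2+(C1-A1)^2)*((A0-B0)^2+(A1-B1)^2))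
      - (((A0-B0)^2+(A1-B1)^2)^2 + ((B0-C0)^2+(B1-C1)^2)^2 + ((C0-A0)^2+(C1-A1)^2)^2) := by
    ring
  rw [hAB, hBC, hCA] at hkey
  linarith [hkey]

private lemma centroid_lemma (A0 A1 B0 B1 C0 C1 O0 O1 R s2 : ℝ)
    (hs : s2 ≠ 0)
    (hAB : (A0-B0)^2+(A1-B1)^2 = s2)
    (hBC : (B0-C0)^2+(B1-C1)^2 = s2)
    (hCA : (C0-A0)^2+(C1-A1)^2 = s2)
    (hOA : (O0-A0)^2+(O1-A1)^2 = R^2)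
    (hOB : (O0-B0)^2+(O1-B1)^2 = R^2)
    (hOC : (O0-C0)^2+(O1-C1)^2 = R^2) :
    A0+B0+C0 = 3*O0 ∧ A1+B1+C1 = 3*O1 ∧ s2 = 3*R^2 := by
  have hGA : ((A0+B0+C0)/3-A0)^2+((A1+B1+C1)/3-A1)^2 = s2/3 := by
    linear_combination (2*hAB + 2*hCA - hBC)/9
  have hGB : ((A0+B0+C0)/3-B0)^2+((A1+B1+C1)/3-B1)^2 = s2/3 := by
    linear_combination (2*hAB + 2*hBC - hCA)/9
  have hGC : ((A0+B0+C0)/3-C0)^2+((A1+B1+C1)/3-C1)^2 = s2/3 := by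
    linear_combination (2*hBC + 2*hCA - hAB)/9
  have hwu : (O0-(A0+B0+C0)/3)*(B0-A0) + (O1-(A1+B1+C1)/3)*(B1-A1) = 0 := by
    linear_combination (hOA - hOB - hGA + hGB)/2
  have hwv : (O0-(A0+B0+C0)/3)*(C0-A0) + (O1-(A1+B1+C1)/3)*(C1-A1) = 0 := by
    linear_combination (hOA - hOC - hGA + hGC)/2
  have hkey : 4*((B0-A0)*(C1-A1) - (B1-A1)*(C0-A0))^2 = 3*s2^2 :=
    detABC A0 A1 B0 B1 C0 C1 s2 hAB hBC hCA
  have hs2 : 0 < s2^2 := pow_two_pos_of_ne_zero hs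
  have hDne : (B0-A0)*(C1-A1) - (B1-A1)*(C0-A0) ≠ 0 := by
    intro h; rw [h] at hkey; ring_nf at hkey; nlinarith [hkey, hs2]
  have hw0 : (O0-(A0+B0+C0)/3) * ((B0-A0)*(C1-A1) - (B1-A1)*(C0-A0)) = 0 := by
    linear_combination (C1-A1)*hwu - (B1-A1)*hwv
  have hw1 : (O1-(A1+B1+C1)/3) * ((B0-A0)*(C1-A1) - (B1-A1)*(C0-A0)) = 0 := by
    linear_combination (B0-A0)*hwv - (C0-A0)*hwu
  have h0 : O0 = (A0+B0+C0)/3 := by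
    rcases mul_eq_zero.mp hw0 with h|h
    · linarith
    · exact absurd h hDne
  have h1 : O1 = (A1+B1+C1)/3 := by
    rcases mul_eq_zero.mp hw1 with h|h
    · linarith
    · exact absurd h hDne
  refine ⟨by linarith, by linarith, ?_⟩
  rw [h0, h1] at hOA
  linarith [hGA, hOA]

private lemma normsq_le (x : E2) (h : ‖x‖ ≤ 1) : x 0^2 + x 1^2 ≤ 1 := by
  have h1 := normsq x
  nlinarith [norm_nonneg x]

private lemma det_ge (d Y R2 : ℝ) (hY : Y^2 ≤ 27/4) (heq : d^2 * Y^2 = 27/4 * R2^2)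
    (hR2 : 0 ≤ R2) : R2 ≤ |d| := by
  have h1 : R2^2 ≤ d^2 := by nlinarith [sq_nonneg d]
  nlinarith [sq_abs d, abs_nonneg d]

private lemma combo_norm (p0 p1 q0 q1 α β t : ℝ)
    (hp : p0^2+p1^2 = t) (hq : q0^2+q1^2 = t) (hpq : (p0-q0)^2+(p1-q1)^2 = 3*t) :
    (α*p0+β*q0)^2 + (α*p1+β*q1)^2 = (α^2 - α*β + β^2) * t := by
  linear_combination (α^2 + α*β)*hp + (β^2+α*β)*hq - α*β*hpq

end
end Aux

theorem stmt_19 (A B C O : EuclideanSpace ℝ (Fin 2)) (R : ℝ)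
    (hAB : A ≠ B)
    (heq1 : dist A B = dist B C) (heq2 : dist B C = dist C A)
    (hOA : dist O A = R) (hOB : dist O B = R) (hOC : dist O C = R)
    (T : Set (EuclideanSpace ℝ (Fin 2)))
    (hT : T = convexHull ℝ {A, B, C}) :
    IsEllipsoid (Metric.closedBall O R) ∧
    T ⊆ Metric.closedBall O R ∧
    (∀ E', IsEllipsoid E' → T ⊆ E' →
      volume (Metric.closedBall O R) ≤ volume E') ∧
    (∀ E', IsEllipsoid E' → T ⊆ E' →
      volume E' = volume (Metric.closedBall O R) → E' = Metric.closedBall O R) := by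
  subst hT
  have hR0 : 0 ≤ R := hOA ▸ dist_nonneg
  have hRne : R ≠ 0 := by
    intro h
    subst h
    exact hAB ((dist_eq_zero.mp hOA).symm.trans (dist_eq_zero.mp hOB))
  have hRpos : 0 < R := lt_of_le_of_ne hR0 (Ne.symm hRne)
  -- squared distance facts
  have dAB : (A 0 - B 0)^2+(A 1 - B 1)^2 = dist A B^2 := (distsq A B).symm
  have dBC : (B 0 - C 0)^2+(B 1 - C 1)^2 = dist A B^2 := by
    rw [heq1]; exact (distsq B C).symm
  have dCA : (C 0 - A 0)^2+(C 1 - A 1)^2 = dist A B^2 := by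
    rw [heq1, heq2]; exact (distsq C A).symm
  have dOA : (O 0 - A 0)^2+(O 1 - A 1)^2 = R^2 := by
    have h := (distsq O A).symm; rw [hOA] at h; exact h
  have dOB : (O 0 - B 0)^2+(O 1 - B 1)^2 = R^2 := by
    have h := (distsq O B).symm; rw [hOB] at h; exact h
  have dOC : (O 0 - C 0)^2+(O 1 - C 1)^2 = R^2 := by
    have h := (distsq O C).symm; rw [hOC] at h; exact h
  have hsne : dist A B ^ 2 ≠ 0 := pow_ne_zero 2 (dist_ne_zero.mpr hAB)
  obtain ⟨hc0, hc1, hSQ⟩ := centroid_lemma (A 0) (A 1) (B 0) (B 1) (C 0) (C 1)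
    (O 0) (O 1) R (dist A B^2) hsne dAB dBC dCA dOA dOB dOC
  -- side squared = 3 R^2
  have hside : (A 0 - B 0)^2+(A 1 - B 1)^2 = 3*R^2 := dAB.trans hSQ
  have hsideBC : (B 0 - C 0)^2+(B 1 - C 1)^2 = 3*R^2 := dBC.trans hSQ
  have hsideCA : (C 0 - A 0)^2+(C 1 - A 1)^2 = 3*R^2 := dCA.trans hSQ
  -- the homothety image fact
  have himg1 : (fun x : EuclideanSpace ℝ (Fin 2) => O + R • x) '' Metric.closedBall 0 1
      = Metric.closedBall O R := by
    ext y
    simp only [Set.mem_image, Metric.mem_closedBall]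
    constructor
    · rintro ⟨x, hx, rfl⟩
      rw [dist_zero_right] at hx
      have hd : dist (O + R • x) O = R * ‖x‖ := by
        rw [dist_eq_norm]
        simp [norm_smul, abs_of_nonneg hR0]
      rw [hd]
      exact mul_le_of_le_one_right hR0 hx
    · intro hy
      refine ⟨R⁻¹ • (y - O), ?_, ?_⟩
      · rw [dist_zero_right, norm_smul, Real.norm_eq_abs, abs_of_nonneg (by positivity : (0:ℝ) ≤ R⁻¹)]
        rw [← dist_eq_norm] at *
        calc R⁻¹ * dist y O ≤ R⁻¹ * R := by
              apply mul_le_mul_of_nonneg_left hy (by positivity)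
          _ = 1 := inv_mul_cancel₀ hRne
      · rw [smul_smul, mul_inv_cancel₀ hRne, one_smul]
        abel
  refine ⟨?_, ?_, ?_, ?_⟩
  · -- IsEllipsoid (closedBall O R)
    refine ⟨((LinearEquiv.smulOfNeZero ℝ _ R hRne).toAffineEquiv).trans
      (AffineEquiv.constVAdd ℝ _ O), ?_⟩
    have hco : ⇑(((LinearEquiv.smulOfNeZero ℝ _ R hRne).toAffineEquiv).trans
        (AffineEquiv.constVAdd ℝ _ O)) = fun x : EuclideanSpace ℝ (Fin 2) => O + R • x := by
      funext x
      simp [AffineEquiv.trans_apply, LinearEquiv.smulOfNeZero, LinearEquiv.smulOfUnit,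
        DistribMulAction.toLinearEquiv, Units.smul_def, vadd_eq_add]
    rw [hco, himg1]
  · -- triangle inside ball
    refine convexHull_min ?_ (convex_closedBall O R)
    intro x hx
    simp only [Set.mem_insert_iff, Set.mem_singleton_iff] at hx
    rcases hx with rfl | rfl | rfl <;>
      simp only [Metric.mem_closedBall] <;> rw [dist_comm]
    · exact le_of_eq hOA
    · exact le_of_eq hOB
    · exact le_of_eq hOC
  · rintro E' ⟨L, rfl⟩ hTE'
    have hdecomp : ∀ x, L x = L.linear.toLinearMap x + L 0 := by
      intro x
      have h := congrFun (AffineMap.decomp L.toAffineMap) x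
      simpa using h
    have hmem : ∀ P ∈ ({A, B, C} : Set (EuclideanSpace ℝ (Fin 2))),
        ‖(L.symm P : EuclideanSpace ℝ (Fin 2))‖ ≤ 1 := by
      intro P hP
      obtain ⟨x, hx, hxP⟩ := hTE' (subset_convexHull ℝ _ hP)
      rw [← hxP, AffineEquiv.symm_apply_apply]
      exact mem_closedBall_zero_iff.mp hx
    have haco : (L.symm A) 0^2 + (L.symm A) 1^2 ≤ 1 := normsq_le _ (hmem A (by simp))
    have hbco : (L.symm B) 0^2 + (L.symm B) 1^2 ≤ 1 := normsq_le _ (hmem B (by simp))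
    have hcco : (L.symm C) 0^2 + (L.symm C) 1^2 ≤ 1 := normsq_le _ (hmem C (by simp))
    have hLa : L.linear.toLinearMap (L.symm A) = A - L 0 := by
      have h := hdecomp (L.symm A)
      rw [AffineEquiv.apply_symm_apply] at h
      exact (eq_sub_of_add_eq h.symm)
    have hLb : L.linear.toLinearMap (L.symm B) = B - L 0 := by
      have h := hdecomp (L.symm B)
      rw [AffineEquiv.apply_symm_apply] at h
      exact (eq_sub_of_add_eq h.symm)
    have hLc : L.linear.toLinearMap (L.symm C) = C - L 0 := by
      have h := hdecomp (L.symm C)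
      rw [AffineEquiv.apply_symm_apply] at h
      exact (eq_sub_of_add_eq h.symm)
    have hBA : L.linear.toLinearMap (L.symm B - L.symm A) = B - A := by
      rw [map_sub, hLa, hLb]; abel
    have hCA2 : L.linear.toLinearMap (L.symm C - L.symm A) = C - A := by
      rw [map_sub, hLa, hLc]; abel
    have hdetrel : det2 (B - A) (C - A) = LinearMap.det L.linear.toLinearMap
        * det2 (L.symm B - L.symm A) (L.symm C - L.symm A) := by
      rw [← hBA, ← hCA2]; exact det2_map L.linear.toLinearMap _ _
    have hDABC : 4 * det2 (B - A) (C - A)^2 = 3 * (3*R^2)^2 := by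
      have h := detABC (A 0) (A 1) (B 0) (B 1) (C 0) (C 1) (3*R^2) hside hsideBC hsideCA
      have hco : det2 (B - A) (C - A) = (B 0 - A 0)*(C 1 - A 1) - (B 1 - A 1)*(C 0 - A 0) := by
        simp [det2]
      rw [hco]; exact h
    have habc : det2 (L.symm B - L.symm A) (L.symm C - L.symm A)^2 ≤ 27/4 := by
      have hco : det2 (L.symm B - L.symm A) (L.symm C - L.symm A)
          = ((L.symm B) 0 - (L.symm A) 0)*((L.symm C) 1 - (L.symm A) 1)
            - ((L.symm B) 1 - (L.symm A) 1)*((L.symm C) 0 - (L.symm A) 0) := by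
        simp [det2]
      rw [hco]
      exact core_ineq _ _ _ _ _ _ haco hbco hcco
    have h2 : det2 (B-A) (C-A)^2 = (LinearMap.det L.linear.toLinearMap)^2
        * det2 (L.symm B - L.symm A) (L.symm C - L.symm A)^2 := by rw [hdetrel]; ring
    have hdsq : (LinearMap.det L.linear.toLinearMap)^2
        * det2 (L.symm B - L.symm A) (L.symm C - L.symm A)^2 = 27/4 * (R^2)^2 := by
      linarith only [hDABC, h2]
    have habs2 : R^2 ≤ |LinearMap.det L.linear.toLinearMap| :=
      det_ge _ _ _ habc hdsq (sq_nonneg R)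
    have himgL : ⇑L '' Metric.closedBall 0 1
        = L 0 +ᵥ (⇑L.linear.toLinearMap '' Metric.closedBall 0 1) := by
      calc ⇑L '' Metric.closedBall 0 1
          = (fun x => L 0 +ᵥ L.linear.toLinearMap x) '' Metric.closedBall 0 1 :=
            Set.image_congr fun x _ => by rw [hdecomp x, vadd_eq_add]; abel
        _ = (fun y => L 0 +ᵥ y) '' (⇑L.linear.toLinearMap '' Metric.closedBall 0 1) := by
            rw [Set.image_image]
        _ = L 0 +ᵥ (⇑L.linear.toLinearMap '' Metric.closedBall 0 1) := Set.image_vadd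
    have hvolE : volume (⇑L '' Metric.closedBall 0 1)
        = ENNReal.ofReal |LinearMap.det L.linear.toLinearMap|
          * volume (Metric.closedBall (0:EuclideanSpace ℝ (Fin 2)) 1) := by
      rw [himgL, measure_vadd, Measure.addHaar_image_linearMap]
    have hvolb : volume (Metric.closedBall O R)
        = ENNReal.ofReal (R^2) * volume (Metric.ball (0:EuclideanSpace ℝ (Fin 2)) 1) := by
      rw [Measure.addHaar_closedBall volume O hR0, finrank_euclideanSpace_fin]
    have hcb : volume (Metric.closedBall (0:EuclideanSpace ℝ (Fin 2)) 1)
        = volume (Metric.ball (0:EuclideanSpace ℝ (Fin 2)) 1) :=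
      Measure.addHaar_closedBall_eq_addHaar_ball _ _ _
    rw [hvolE, hvolb, hcb]
    exact mul_le_mul_left (ENNReal.ofReal_le_ofReal habs2) _
  · rintro E' ⟨L, rfl⟩ hTE' hvol
    have hdecomp : ∀ x, L x = L.linear.toLinearMap x + L 0 := by
      intro x
      have h := congrFun (AffineMap.decomp L.toAffineMap) x
      simpa using h
    have hmem : ∀ P ∈ ({A, B, C} : Set (EuclideanSpace ℝ (Fin 2))),
        ‖(L.symm P : EuclideanSpace ℝ (Fin 2))‖ ≤ 1 := by
      intro P hP
      obtain ⟨x, hx, hxP⟩ := hTE' (subset_convexHull ℝ _ hP)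
      rw [← hxP, AffineEquiv.symm_apply_apply]
      exact mem_closedBall_zero_iff.mp hx
    have haco : (L.symm A) 0^2 + (L.symm A) 1^2 ≤ 1 := normsq_le _ (hmem A (by simp))
    have hbco : (L.symm B) 0^2 + (L.symm B) 1^2 ≤ 1 := normsq_le _ (hmem B (by simp))
    have hcco : (L.symm C) 0^2 + (L.symm C) 1^2 ≤ 1 := normsq_le _ (hmem C (by simp))
    have hLa : L.linear.toLinearMap (L.symm A) = A - L 0 := by
      have h := hdecomp (L.symm A)
      rw [AffineEquiv.apply_symm_apply] at h
      exact (eq_sub_of_add_eq h.symm)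
    have hLb : L.linear.toLinearMap (L.symm B) = B - L 0 := by
      have h := hdecomp (L.symm B)
      rw [AffineEquiv.apply_symm_apply] at h
      exact (eq_sub_of_add_eq h.symm)
    have hLc : L.linear.toLinearMap (L.symm C) = C - L 0 := by
      have h := hdecomp (L.symm C)
      rw [AffineEquiv.apply_symm_apply] at h
      exact (eq_sub_of_add_eq h.symm)
    have hBA : L.linear.toLinearMap (L.symm B - L.symm A) = B - A := by
      rw [map_sub, hLa, hLb]; abel
    have hCA2 : L.linear.toLinearMap (L.symm C - L.symm A) = C - A := by
      rw [map_sub, hLa, hLc]; abel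
    have hdetrel : det2 (B - A) (C - A) = LinearMap.det L.linear.toLinearMap
        * det2 (L.symm B - L.symm A) (L.symm C - L.symm A) := by
      rw [← hBA, ← hCA2]; exact det2_map L.linear.toLinearMap _ _
    have hDABC : 4 * det2 (B - A) (C - A)^2 = 3 * (3*R^2)^2 := by
      have h := detABC (A 0) (A 1) (B 0) (B 1) (C 0) (C 1) (3*R^2) hside hsideBC hsideCA
      have hco : det2 (B - A) (C - A) = (B 0 - A 0)*(C 1 - A 1) - (B 1 - A 1)*(C 0 - A 0) := by
        simp [det2]
      rw [hco]; exact h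
    have habc : det2 (L.symm B - L.symm A) (L.symm C - L.symm A)^2 ≤ 27/4 := by
      have hco : det2 (L.symm B - L.symm A) (L.symm C - L.symm A)
          = ((L.symm B) 0 - (L.symm A) 0)*((L.symm C) 1 - (L.symm A) 1)
            - ((L.symm B) 1 - (L.symm A) 1)*((L.symm C) 0 - (L.symm A) 0) := by
        simp [det2]
      rw [hco]
      exact core_ineq _ _ _ _ _ _ haco hbco hcco
    have h2 : det2 (B-A) (C-A)^2 = (LinearMap.det L.linear.toLinearMap)^2
        * det2 (L.symm B - L.symm A) (L.symm C - L.symm A)^2 := by rw [hdetrel]; ring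
    have hdsq : (LinearMap.det L.linear.toLinearMap)^2
        * det2 (L.symm B - L.symm A) (L.symm C - L.symm A)^2 = 27/4 * (R^2)^2 := by
      linarith only [hDABC, h2]
    have himgL : ⇑L '' Metric.closedBall 0 1
        = L 0 +ᵥ (⇑L.linear.toLinearMap '' Metric.closedBall 0 1) := by
      calc ⇑L '' Metric.closedBall 0 1
          = (fun x => L 0 +ᵥ L.linear.toLinearMap x) '' Metric.closedBall 0 1 :=
            Set.image_congr fun x _ => by rw [hdecomp x, vadd_eq_add]; abel
        _ = (fun y => L 0 +ᵥ y) '' (⇑L.linear.toLinearMap '' Metric.closedBall 0 1) := by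
            rw [Set.image_image]
        _ = L 0 +ᵥ (⇑L.linear.toLinearMap '' Metric.closedBall 0 1) := Set.image_vadd
    have hvolE : volume (⇑L '' Metric.closedBall 0 1)
        = ENNReal.ofReal |LinearMap.det L.linear.toLinearMap|
          * volume (Metric.closedBall (0:EuclideanSpace ℝ (Fin 2)) 1) := by
      rw [himgL, measure_vadd, Measure.addHaar_image_linearMap]
    have hvolb : volume (Metric.closedBall O R)
        = ENNReal.ofReal (R^2) * volume (Metric.ball (0:EuclideanSpace ℝ (Fin 2)) 1) := by
      rw [Measure.addHaar_closedBall volume O hR0, finrank_euclideanSpace_fin]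
    have hcb : volume (Metric.closedBall (0:EuclideanSpace ℝ (Fin 2)) 1)
        = volume (Metric.ball (0:EuclideanSpace ℝ (Fin 2)) 1) :=
      Measure.addHaar_closedBall_eq_addHaar_ball _ _ _
    have hV0 : volume (Metric.ball (0:EuclideanSpace ℝ (Fin 2)) 1) ≠ 0 :=
      (Metric.measure_ball_pos volume 0 one_pos).ne'
    have hVt : volume (Metric.ball (0:EuclideanSpace ℝ (Fin 2)) 1) ≠ ⊤ :=
      measure_ball_lt_top.ne
    rw [hvolE, hvolb, hcb] at hvol
    have habs_eq : |LinearMap.det L.linear.toLinearMap| = R^2 :=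
      (ENNReal.ofReal_eq_ofReal_iff (abs_nonneg _) (sq_nonneg R)).mp
        ((ENNReal.mul_left_inj hV0 hVt).mp hvol)
    have hd4 : (LinearMap.det L.linear.toLinearMap)^2 = (R^2)^2 := by
      rw [← sq_abs, habs_eq]
    have hY2 : det2 (L.symm B - L.symm A) (L.symm C - L.symm A)^2 = 27/4 := by
      have h' : (R^2)^2 * (det2 (L.symm B - L.symm A) (L.symm C - L.symm A)^2)
          = (R^2)^2 * (27/4) := by
        linear_combination hdsq - (det2 (L.symm B - L.symm A) (L.symm C - L.symm A)^2) * hd4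
      exact mul_left_cancel₀ (by positivity) h'
    have hYco : ((L.symm B) 0 - (L.symm A) 0)*((L.symm C) 1 - (L.symm A) 1)
        - ((L.symm B) 1 - (L.symm A) 1)*((L.symm C) 0 - (L.symm A) 0)
        = det2 (L.symm B - L.symm A) (L.symm C - L.symm A) := by
      simp [det2]
    obtain ⟨ha1, hb1, hc1, hsum0, hsum1, hbc3, hca3, hab3⟩ :=
      core_eq ((L.symm A) 0) ((L.symm A) 1) ((L.symm B) 0) ((L.symm B) 1)
        ((L.symm C) 0) ((L.symm C) 1) haco hbco hcco (by rw [hYco]; exact hY2)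
    -- L 0 = O
    have habcsum : L.symm A + L.symm B + L.symm C = 0 := by
      apply e2ext <;> simp [PiLp.add_apply]
      · exact hsum0
      · exact hsum1
    have hsumL : (A - L 0) + (B - L 0) + (C - L 0) = 0 := by
      rw [← hLa, ← hLb, ← hLc, ← map_add, ← map_add, habcsum, map_zero]
    have hL0 : L 0 = O := by
      apply e2ext
      · have h := congrArg (fun v : EuclideanSpace ℝ (Fin 2) => v 0) hsumL
        simp only [PiLp.add_apply, PiLp.sub_apply, PiLp.zero_apply] at h
        linarith [hc0]
      · have h := congrArg (fun v : EuclideanSpace ℝ (Fin 2) => v 1) hsumL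
        simp only [PiLp.add_apply, PiLp.sub_apply, PiLp.zero_apply] at h
        linarith [hc1]
    have hLa2 : L.linear.toLinearMap (L.symm A) = A - O := by rw [hLa, hL0]
    have hLb2 : L.linear.toLinearMap (L.symm B) = B - O := by rw [hLb, hL0]
    -- coordinates facts for the isometry argument
    have hAO : (A 0 - O 0)^2 + (A 1 - O 1)^2 = R^2 := by linear_combination dOA
    have hBO : (B 0 - O 0)^2 + (B 1 - O 1)^2 = R^2 := by linear_combination dOB
    have hABO : ((A 0 - O 0) - (B 0 - O 0))^2 + ((A 1 - O 1) - (B 1 - O 1))^2 = 3*R^2 := by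
      linear_combination hside
    have hab3' : ((L.symm A) 0 - (L.symm B) 0)^2 + ((L.symm A) 1 - (L.symm B) 1)^2 = 3*1 := by
      linear_combination hab3
    -- nonvanishing of det2 a b
    have ht : (L.symm A) 0 * (L.symm B) 0 + (L.symm A) 1 * (L.symm B) 1 = -(1/2) := by
      linear_combination (ha1 + hb1 - hab3)/2
    have hDab : ((L.symm A) 0 * (L.symm B) 1 - (L.symm A) 1 * (L.symm B) 0)^2 = 3/4 := by
      linear_combination ((L.symm B) 0^2 + (L.symm B) 1^2)*ha1 + hb1
        - ((L.symm A) 0 * (L.symm B) 0 + (L.symm A) 1 * (L.symm B) 1 - 1/2)*ht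
    have hDabne : (L.symm A) 0 * (L.symm B) 1 - (L.symm A) 1 * (L.symm B) 0 ≠ 0 := by
      intro h; rw [h] at hDab; norm_num at hDab
    -- the norm-scaling property
    have hnormφ : ∀ x : EuclideanSpace ℝ (Fin 2),
        ‖L.linear.toLinearMap x‖ = R * ‖x‖ := by
      intro x
      have hexists : ∃ α β : ℝ, x = α • L.symm A + β • L.symm B := by
        refine ⟨(x 0 * (L.symm B) 1 - x 1 * (L.symm B) 0)
            / ((L.symm A) 0 * (L.symm B) 1 - (L.symm A) 1 * (L.symm B) 0),
          ((L.symm A) 0 * x 1 - (L.symm A) 1 * x 0)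
            / ((L.symm A) 0 * (L.symm B) 1 - (L.symm A) 1 * (L.symm B) 0), ?_⟩
        apply e2ext <;> simp only [PiLp.add_apply, PiLp.smul_apply, smul_eq_mul] <;>
          rw [div_mul_eq_mul_div, div_mul_eq_mul_div, ← add_div, eq_div_iff hDabne] <;> ring
      obtain ⟨α, β, hxv⟩ := hexists
      have hφxv : L.linear.toLinearMap x = α • (A - O) + β • (B - O) := by
        rw [hxv, map_add, LinearMap.map_smul, LinearMap.map_smul, hLa2, hLb2]
      have hx0 : x 0 = α * (L.symm A) 0 + β * (L.symm B) 0 := by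
        rw [hxv]; simp
      have hx1 : x 1 = α * (L.symm A) 1 + β * (L.symm B) 1 := by
        rw [hxv]; simp
      have hφ0 : (L.linear.toLinearMap x) 0 = α * (A 0 - O 0) + β * (B 0 - O 0) := by
        rw [hφxv]; simp [PiLp.sub_apply]
      have hφ1 : (L.linear.toLinearMap x) 1 = α * (A 1 - O 1) + β * (B 1 - O 1) := by
        rw [hφxv]; simp [PiLp.sub_apply]
      have hnx : ‖x‖^2 = (α^2 - α*β + β^2) * 1 := by
        rw [normsq, hx0, hx1]
        exact combo_norm _ _ _ _ α β 1 ha1 hb1 hab3'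
      have hny : ‖L.linear.toLinearMap x‖^2 = (α^2 - α*β + β^2) * R^2 := by
        rw [normsq, hφ0, hφ1]
        exact combo_norm _ _ _ _ α β (R^2) hAO hBO hABO
      have hsq : ‖L.linear.toLinearMap x‖^2 = (R * ‖x‖)^2 := by
        rw [mul_pow]
        linear_combination hny - R^2 * hnx
      exact (sq_eq_sq₀ (norm_nonneg _) (by positivity)).mp hsq
    -- conclude set equality
    ext y
    simp only [Set.mem_image]
    constructor
    · rintro ⟨x, hx, rfl⟩
      have hx1 : ‖x‖ ≤ 1 := mem_closedBall_zero_iff.mp hx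
      have hd : dist (L x) O = ‖L.linear.toLinearMap x‖ := by
        rw [hdecomp x, hL0, dist_eq_norm]
        congr 1
        abel
      rw [Metric.mem_closedBall, hd, hnormφ x]
      exact mul_le_of_le_one_right hR0 hx1
    · intro hy
      refine ⟨L.symm y, ?_, AffineEquiv.apply_symm_apply L y⟩
      have h2 : L.linear.toLinearMap (L.symm y) = y - O := by
        have h := hdecomp (L.symm y)
        rw [AffineEquiv.apply_symm_apply, hL0] at h
        exact (eq_sub_of_add_eq h.symm)
      have h1 : ‖y - O‖ = R * ‖L.symm y‖ := by rw [← h2]; exact hnormφ _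
      have h3 : R * ‖L.symm y‖ ≤ R * 1 := by
        rw [mul_one, ← h1, ← dist_eq_norm]
        exact Metric.mem_closedBall.mp hy
      rw [mem_closedBall_zero_iff]
      exact le_of_mul_le_mul_left h3 hRpos
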